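/- For every complex z with |z| < π/2, |tan z| ≤ tan|z|. -/

import Mathlib

open Real

lemma sinh_le_mul_cosh {t : ℝ} (ht : 0 ≤ t) : Real.sinh t ≤ t * Real.cosh t := by
  have h : MonotoneOn (fun t : ℝ => t * Real.cosh t - Real.sinh t) (Set.Ici 0) := by
    apply monotoneOn_of_deriv_nonneg (convex_Ici 0)
    · fun_prop
    · intro x hx
      exact (((hasDerivAt_id x).mul (Real.hasDerivAt_cosh x)).sub
        (Real.hasDerivAt_sinh x)).differentiableAt.differentiableWithinAt
    · intro x hx
      rw [interior_Ici] at hx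
      have hd : HasDerivAt (fun t : ℝ => t * Real.cosh t - Real.sinh t)
          (1 * Real.cosh x + x * Real.sinh x - Real.cosh x) x :=
        ((hasDerivAt_id x).mul (Real.hasDerivAt_cosh x)).sub (Real.hasDerivAt_sinh x)
      rw [hd.deriv]
      have hx0 : 0 < x := hx
      have hsn : 0 ≤ Real.sinh x := by
        rw [← Real.sinh_zero]; exact Real.sinh_le_sinh.2 hx0.le
      nlinarith [mul_nonneg hx0.le hsn]
  have h0 := h (Set.self_mem_Ici) (Set.mem_Ici.2 ht) ht
  simp at h0
  linarith

lemma key_ineq {a b : ℝ} (ha : 0 ≤ a) (hb : 0 ≤ b)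
    (hs : Real.sqrt (a ^ 2 + b ^ 2) < π) :
    Real.cos (Real.sqrt (a ^ 2 + b ^ 2)) * Real.cosh b ≤ Real.cos a := by
  set g : ℝ → ℝ := fun t => Real.cos (Real.sqrt (a ^ 2 + t ^ 2)) * Real.cosh t with hg
  have hderiv : ∀ t ∈ Set.Ioo 0 b, HasDerivAt g
      (-Real.sin (Real.sqrt (a ^ 2 + t ^ 2)) * (1 / (2 * Real.sqrt (a ^ 2 + t ^ 2)) * (2 * t ^ 1))
        * Real.cosh t + Real.cos (Real.sqrt (a ^ 2 + t ^ 2)) * Real.sinh t) t := by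
    intro t ht
    have hpos : (0:ℝ) < a ^ 2 + t ^ 2 := by nlinarith [ht.1]
    have h1 : HasDerivAt (fun t : ℝ => a ^ 2 + t ^ 2) (2 * t ^ 1) t :=
      (hasDerivAt_pow 2 t).const_add (a ^ 2)
    have h2 := (Real.hasDerivAt_sqrt hpos.ne').comp t h1
    have h3 := (Real.hasDerivAt_cos (Real.sqrt (a ^ 2 + t ^ 2))).comp t h2
    exact h3.mul (Real.hasDerivAt_cosh t)
  have hanti : AntitoneOn g (Set.Icc 0 b) := by
    apply antitoneOn_of_deriv_nonpos (convex_Icc 0 b)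
    · fun_prop
    · intro x hx
      rw [interior_Icc] at hx
      exact (hderiv x hx).differentiableAt.differentiableWithinAt
    · intro t ht
      rw [interior_Icc] at ht
      rw [(hderiv t ht).deriv]
      set u := Real.sqrt (a ^ 2 + t ^ 2) with hu
      have ht0 : 0 < t := ht.1
      have hu0 : 0 < u := Real.sqrt_pos.2 (by nlinarith)
      have htu : t ≤ u := by
        rw [hu]
        have : t ^ 2 ≤ a ^ 2 + t ^ 2 := by nlinarith
        calc t = Real.sqrt (t ^ 2) := (Real.sqrt_sq ht0.le).symm
          _ ≤ _ := Real.sqrt_le_sqrt this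
      have hupi : u < π := by
        calc u ≤ Real.sqrt (a ^ 2 + b ^ 2) :=
              Real.sqrt_le_sqrt (by nlinarith [ht.2])
          _ < π := hs
      have hsinu : 0 ≤ Real.sin u := Real.sin_nonneg_of_nonneg_of_le_pi hu0.le hupi.le
      have hsinht : 0 < Real.sinh t := by
        rw [← Real.sinh_zero]; exact Real.sinh_lt_sinh.2 ht0
      have hcosht : 0 < Real.cosh t := Real.cosh_pos t
      -- reduce to : cos u * sinh t ≤ sin u * (t/u) * cosh t
      have main : Real.cos u * Real.sinh t * u ≤ Real.sin u * t * Real.cosh t := by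
        rcases le_or_gt (Real.cos u) 0 with hc | hc
        · nlinarith [mul_nonneg (mul_nonneg hsinu ht0.le) hcosht.le,
            mul_nonneg (mul_nonneg (neg_nonneg.2 hc) hsinht.le) hu0.le]
        · have hu2 : u < π / 2 := by
            by_contra hle
            push_neg at hle
            exact absurd (Real.cos_nonpos_of_pi_div_two_le_of_le hle (by linarith)) (by linarith)
          have htan : u < Real.tan u := Real.lt_tan hu0 hu2
          rw [Real.tan_eq_sin_div_cos, lt_div_iff₀ hc] at htan
          have hst : Real.sinh t ≤ t * Real.cosh t := sinh_le_mul_cosh ht0.le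
          nlinarith
      have expand : -Real.sin u * (1 / (2 * u) * (2 * t ^ 1)) * Real.cosh t
          + Real.cos u * Real.sinh t
          = (Real.cos u * Real.sinh t * u - Real.sin u * t * Real.cosh t) / u := by
        field_simp
        ring
      rw [expand]
      apply div_nonpos_of_nonpos_of_nonneg _ hu0.le
      linarith
  have h := hanti (Set.left_mem_Icc.2 hb) (Set.right_mem_Icc.2 hb) hb
  have h0 : g 0 = Real.cos a := by
    show Real.cos (Real.sqrt (a ^ 2 + 0 ^ 2)) * Real.cosh 0 = Real.cos a
    rw [Real.cosh_zero, mul_one]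
    norm_num [Real.sqrt_sq ha]
  rw [h0] at h
  exact h

set_option maxHeartbeats 1000000 in
/-- For every complex `z` with `|z| < π/2`, `|tan z| ≤ tan |z|`. -/
theorem abs_tan_le (z : ℂ) (hz : ‖z‖ < Real.pi / 2) :
    ‖Complex.tan z‖ ≤ Real.tan (‖z‖) := by
  set r := ‖z‖ with hr
  set x := z.re with hx
  set y := z.im with hy
  have hr0 : 0 ≤ r := norm_nonneg z
  have hr2 : x ^ 2 + y ^ 2 = r ^ 2 := by
    rw [hr, Complex.sq_norm, Complex.normSq_apply]; ring
  have hcosr : 0 < Real.cos r := Real.cos_pos_of_mem_Ioo ⟨by linarith [Real.pi_pos], hz⟩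
  have hsinr : 0 ≤ Real.sin r := Real.sin_nonneg_of_nonneg_of_le_pi hr0
    (by linarith [Real.pi_pos])
  -- |sin z|^2 and |cos z|^2
  have habs_sin : ‖Complex.sin z‖ ^ 2 = Real.sin x ^ 2 + Real.sinh y ^ 2 := by
    rw [Complex.sq_norm, Complex.sin_eq, ← Complex.ofReal_sin, ← Complex.ofReal_cos,
      ← Complex.ofReal_sinh, ← Complex.ofReal_cosh, ← Complex.ofReal_mul,
      ← Complex.ofReal_mul, Complex.normSq_add_mul_I]
    nlinarith [Real.sin_sq_add_cos_sq x, Real.cosh_sq y]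
  have habs_cos : ‖Complex.cos z‖ ^ 2 = Real.cos x ^ 2 + Real.sinh y ^ 2 := by
    rw [Complex.sq_norm, Complex.cos_eq, ← Complex.ofReal_sin, ← Complex.ofReal_cos,
      ← Complex.ofReal_sinh, ← Complex.ofReal_cosh, ← Complex.ofReal_mul,
      ← Complex.ofReal_mul, sub_eq_add_neg, ← neg_mul, ← Complex.ofReal_neg,
      Complex.normSq_add_mul_I]
    nlinarith [Real.sin_sq_add_cos_sq x, Real.cosh_sq y]
  -- key inequality
  have hkey : Real.cos (2 * r) * Real.cosh (2 * y) ≤ Real.cos (2 * x) := by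
    have h2r : Real.sqrt ((2 * |x|) ^ 2 + (2 * |y|) ^ 2) = 2 * r := by
      rw [show (2 * |x|) ^ 2 + (2 * |y|) ^ 2 = (2 * r) ^ 2 by
        rw [mul_pow, mul_pow, sq_abs, sq_abs]; nlinarith]
      exact Real.sqrt_sq (by linarith)
    have := key_ineq (a := 2 * |x|) (b := 2 * |y|) (by positivity) (by positivity)
      (by rw [h2r]; linarith [Real.pi_pos, hz])
    rw [h2r] at this
    rcases abs_choice x with hax | hax <;> rcases abs_choice y with hay | hay <;>
      rw [hax, hay] at this <;>
      simpa [mul_neg, Real.cos_neg, Real.cosh_neg] using this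
  -- squared main inequality
  have hsq : (‖Complex.sin z‖ * Real.cos r) ^ 2
      ≤ (Real.sin r * ‖Complex.cos z‖) ^ 2 := by
    rw [mul_pow, mul_pow, habs_sin, habs_cos]
    have e1 : Real.cos (2 * x) = 1 - 2 * Real.sin x ^ 2 := by
      rw [Real.cos_two_mul']; nlinarith [Real.sin_sq_add_cos_sq x]
    have e2 : Real.cos (2 * r) = 1 - 2 * Real.sin r ^ 2 := by
      rw [Real.cos_two_mul']; nlinarith [Real.sin_sq_add_cos_sq r]
    have e3 : Real.cosh (2 * y) = 1 + 2 * Real.sinh y ^ 2 := by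
      rw [Real.cosh_two_mul]; nlinarith [Real.cosh_sq y]
    rw [e1, e2, e3] at hkey
    nlinarith [Real.sin_sq_add_cos_sq x, Real.sin_sq_add_cos_sq r]
  have hcosz : 0 < ‖Complex.cos z‖ := by
    have h2 : 0 < ‖Complex.cos z‖ ^ 2 := by
      rw [habs_cos]
      rcases eq_or_ne y 0 with hy0 | hy0
      · have hxr : |x| ≤ r := Complex.abs_re_le_norm z
        have haxr := abs_lt.1 (lt_of_le_of_lt hxr hz)
        have hcx : 0 < Real.cos x := Real.cos_pos_of_mem_Ioo ⟨by linarith [haxr.1], haxr.2⟩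
        positivity
      · have hsy : Real.sinh y ≠ 0 := Real.sinh_ne_zero.2 hy0
        positivity
    nlinarith [norm_nonneg (Complex.cos z)]
  have hmain : ‖Complex.sin z‖ * Real.cos r
      ≤ Real.sin r * ‖Complex.cos z‖ :=
    le_of_pow_le_pow_left₀ two_ne_zero (by positivity) hsq
  rw [Complex.tan_eq_sin_div_cos, norm_div, Real.tan_eq_sin_div_cos,
    div_le_div_iff₀ hcosz hcosr]
  linarith
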